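/- Let c ≥ 3 and let ε be a reduced billiard table word of crossing number c. Then the total number of vertically smoothed crossings of ε is at most twice the number of viable vertically smoothed crossings of ε. -/

import Mathlib

/-- A reduced billiard table word of crossing number `c`: a function `ε` on `{1,…,c}`
with values in `{1,2}`, `ε 1 = 1 = ε c`, and total length `≡ 1 (mod 3)`. -/
def IsWord (c : ℕ) (ε : ℕ → ℕ) : Prop :=
  (∀ i, 1 ≤ i → i ≤ c → ε i = 1 ∨ ε i = 2) ∧
  ε 1 = 1 ∧ ε c = 1 ∧ (∑ i ∈ Finset.Icc 1 c, ε i) % 3 = 1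

/-- The set of reduced billiard table words of crossing number `c`, each word represented
by its unique extension by `0` outside `{1,…,c}`. -/
def WordSet (c : ℕ) : Set (ℕ → ℕ) :=
  {ε | IsWord c ε ∧ ∀ i, ¬(1 ≤ i ∧ i ≤ c) → ε i = 0}

/-- The starting position of crossing `i`: `p i = 1 + ∑_{j=1}^{i-1} ε j`. -/
def pos (ε : ℕ → ℕ) (i : ℕ) : ℕ := 1 + ∑ j ∈ Finset.Icc 1 (i - 1), ε j

/-- Crossing `i` is horizontally smoothed. -/
def Horiz (ε : ℕ → ℕ) (i : ℕ) : Prop :=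
  (ε i = 1 ∧ pos ε i % 3 = 1) ∨ (ε i = 2 ∧ pos ε i % 3 = 2)

/-- Crossing `i` is vertically smoothed. -/
def Vert (ε : ℕ → ℕ) (i : ℕ) : Prop := ¬ Horiz ε i

/-- The height of crossing `i`. -/
def height (ε : ℕ → ℕ) (i : ℕ) : ℕ :=
  if (Odd i ∧ ε i = 1) ∨ (Even i ∧ ε i = 2) then 1 else 2

open Classical in
/-- The number of vertically smoothed crossings of `ε` (crossing number `c`). -/
noncomputable def vertCount (c : ℕ) (ε : ℕ → ℕ) : ℕ :=
  ((Finset.Icc 1 c).filter (fun i => Vert ε i)).card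

/-- A vertically smoothed crossing `i` is viable if either no later crossing is vertically
smoothed, or the least vertically smoothed crossing `j > i` has the same height as `i`. -/
def Viable (c : ℕ) (ε : ℕ → ℕ) (i : ℕ) : Prop :=
  Vert ε i ∧
    ((∀ j, i < j → j ≤ c → ¬ Vert ε j) ∨
      ∃ j, i < j ∧ j ≤ c ∧ Vert ε j ∧ (∀ k, i < k → k < j → ¬ Vert ε k) ∧
        height ε j = height ε i)

open Classical in
/-- The number of viable vertically smoothed crossings of `ε` (crossing number `c`). -/
noncomputable def viableCount (c : ℕ) (ε : ℕ → ℕ) : ℕ :=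
  ((Finset.Icc 1 c).filter (fun i => Viable c ε i)).card


lemma pos_succ (ε : ℕ → ℕ) (i : ℕ) (hi : 1 ≤ i) :
    pos ε (i + 1) = pos ε i + ε i := by
  obtain ⟨m, rfl⟩ : ∃ m, i = m + 1 := ⟨i - 1, by omega⟩
  unfold pos
  simp only [Nat.add_sub_cancel]
  rw [Finset.sum_Icc_succ_top (by omega : 1 ≤ m + 1)]
  ring

lemma pos_top (c : ℕ) (ε : ℕ → ℕ) (hw : IsWord c ε) : pos ε (c + 1) % 3 = 2 := by
  unfold pos
  simp only [Nat.add_sub_cancel]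
  have := hw.2.2.2
  omega

lemma vert_of_zero (ε : ℕ → ℕ) (i : ℕ) (hp : pos ε i % 3 = 0) : Vert ε i := by
  unfold Vert Horiz
  omega

lemma vert_sum3 (ε : ℕ → ℕ) (i : ℕ) (he : ε i = 1 ∨ ε i = 2) (hv : Vert ε i)
    (hp : pos ε i % 3 ≠ 0) : ε i + pos ε i % 3 = 3 := by
  unfold Vert Horiz at hv
  omega

lemma height_parity (ε : ℕ → ℕ) (i : ℕ) (h : ε i = 1 ∨ ε i = 2) :
    height ε i = 1 ↔ (i + ε i) % 2 = 0 := by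
  have key : height ε i = 1 ↔ ((Odd i ∧ ε i = 1) ∨ (Even i ∧ ε i = 2)) := by
    unfold height
    split_ifs with hc <;> simp [hc]
  rw [key, Nat.odd_iff, Nat.even_iff]
  rcases h with h1 | h1 <;> rw [h1] <;> omega

lemma height_vals (ε : ℕ → ℕ) (i : ℕ) : height ε i = 1 ∨ height ε i = 2 := by
  unfold height
  split_ifs <;> simp

lemma height_eq (ε : ℕ → ℕ) (i j : ℕ) (hi : ε i = 1 ∨ ε i = 2) (hj : ε j = 1 ∨ ε j = 2)
    (h : (j + ε j) % 2 = (i + ε i) % 2) : height ε j = height ε i := by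
  have h1 := height_parity ε i hi
  have h2 := height_parity ε j hj
  rcases height_vals ε i with e | e <;> rcases height_vals ε j with f | f <;> rw [e, f]
  · have a1 : (i + ε i) % 2 = 0 := h1.mp e
    have a2 : (j + ε j) % 2 ≠ 0 := fun hz => by rw [h2.mpr hz] at f; omega
    omega
  · have a1 : (i + ε i) % 2 ≠ 0 := fun hz => by rw [h1.mpr hz] at e; omega
    have a2 : (j + ε j) % 2 = 0 := h2.mp f
    omega

lemma run_lemma (c : ℕ) (ε : ℕ → ℕ) (hw : IsWord c ε) (i j : ℕ) (hi : 1 ≤ i)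
    (hij : i < j) (hjc : j ≤ c) (h0 : pos ε i % 3 = 0)
    (hmin : ∀ k, i < k → k < j → ¬ Vert ε k) :
    ∀ k, i + 1 ≤ k → k ≤ j →
      pos ε k % 3 ≠ 0 ∧ (pos ε k % 3 + k) % 2 = (ε i + i + 1) % 2 := by
  intro k hk1
  induction k, hk1 using Nat.le_induction with
  | base =>
    intro _
    have he : ε i = 1 ∨ ε i = 2 := hw.1 i hi (by omega)
    have hp := pos_succ ε i hi
    rcases he with h | h <;> rw [h] at hp ⊢ <;> omega
  | succ n hn ih =>
    intro hnj
    have hih := ih (by omega)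
    have hnv : ¬ Vert ε n := hmin n (by omega) (by omega)
    have hh : Horiz ε n := by unfold Vert at hnv; exact not_not.mp hnv
    have hp := pos_succ ε n (by omega)
    rcases hh with ⟨h1, h2⟩ | ⟨h1, h2⟩ <;> rw [h1] at hp <;> omega


/-- The total number of vertically smoothed crossings is at most twice the number of
viable vertically smoothed crossings. -/
theorem vertCount_le_two_mul_viableCount (c : ℕ) (hc : 3 ≤ c) (ε : ℕ → ℕ)
    (hw : IsWord c ε) :
    vertCount c ε ≤ 2 * viableCount c ε := by
  classical
  have hε := hw.1
  have hsplit := Finset.card_filter_add_card_filter_not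
      (s := (Finset.Icc 1 c).filter (fun i => Vert ε i)) (p := fun i => pos ε i % 3 = 0)
  rw [Finset.filter_filter, Finset.filter_filter] at hsplit
  set B := (Finset.Icc 1 c).filter (fun i => Vert ε i ∧ pos ε i % 3 = 0) with hB
  set A := (Finset.Icc 1 c).filter (fun i => Vert ε i ∧ ¬ pos ε i % 3 = 0) with hA
  have hAB : A.card ≤ B.card := by
    apply Finset.card_le_card_of_injOn (fun i => i + 1)
    · intro i hiA
      simp only [hA, Finset.mem_coe, Finset.mem_filter, Finset.mem_Icc] at hiA
      obtain ⟨⟨hi1, hic⟩, hv, hp⟩ := hiA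
      have he := hε i hi1 hic
      have h3 := vert_sum3 ε i he hv hp
      have hp1 := pos_succ ε i hi1
      have hz : pos ε (i + 1) % 3 = 0 := by omega
      have hlt : i < c := by
        rcases Nat.lt_or_ge i c with h | h
        · exact h
        · have hic' : c = i := by omega
          have htop := pos_top c ε hw
          rw [hic'] at htop
          omega
      simp only [hB, Finset.mem_coe, Finset.mem_filter, Finset.mem_Icc]
      exact ⟨⟨by omega, by omega⟩, vert_of_zero ε (i + 1) hz, hz⟩
    · intro a _ b _ hab
      simpa using hab
  have hBv : B.card ≤ viableCount c ε := by
    unfold viableCount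
    apply Finset.card_le_card
    intro i hiB
    simp only [hB, Finset.mem_filter, Finset.mem_Icc] at hiB ⊢
    obtain ⟨⟨hi1, hic⟩, hv, hp⟩ := hiB
    refine ⟨⟨hi1, hic⟩, hv, ?_⟩
    by_cases hT : ∃ j, i < j ∧ j ≤ c ∧ Vert ε j
    · right
      set j := Nat.find hT with hj
      obtain ⟨hij, hjc, hvj⟩ := Nat.find_spec hT
      have hmin : ∀ k, i < k → k < j → ¬ Vert ε k := by
        intro k hk1 hk2 hvk
        exact Nat.find_min hT hk2 ⟨hk1, by omega, hvk⟩
      refine ⟨j, hij, hjc, hvj, hmin, ?_⟩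
      obtain ⟨hpj, hpar⟩ := run_lemma c ε hw i j hi1 hij hjc hp hmin j (by omega) le_rfl
      have hej := hε j (by omega) hjc
      have h3j := vert_sum3 ε j hej hvj hpj
      have hei := hε i hi1 hic
      exact height_eq ε i j hei hej (by omega)
    · left
      intro j hj hjc hvj
      exact hT ⟨j, hj, hjc, hvj⟩
  unfold vertCount
  omega
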